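/- Fix integers n ≥ 1 and 1 ≤ h ≤ n, and a real θ ∈ (0,1); take λ = 1 and l = h−1. Let c^{(1,θ)}_{n,h,h−1} denote the coefficient of the monomial k^{n−h} (i.e., j^0 k^{n−h}) in the coefficient q^{(n,h)}_{n−h} of the quotient polynomial Q_{n,h,h−1}. Then c^{(1,θ)}_{n,h,h−1} = (1−θ)^n θ^{n−1} C(2n, n−h). -/

import Mathlib

open Polynomial

/-- Rising factorial in a commutative ring: `(a)_m = a (a+1) ⋯ (a+m−1)`, with `(a)_0 = 1`. -/
noncomputable def rfp {S : Type*} [CommRing S] (a : S) (m : ℕ) : S :=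
  ∏ i ∈ Finset.range m, (a + (i : S))

/-- The base ring `R = ℝ[j,k]`. -/
abbrev R2 : Type := MvPolynomial (Fin 2) ℝ

/-- The variable `j` as a constant of `R[d]`. -/
noncomputable def Jv : Polynomial R2 := Polynomial.C (MvPolynomial.X 0)

/-- The variable `k` as a constant of `R[d]`. -/
noncomputable def Kv : Polynomial R2 := Polynomial.C (MvPolynomial.X 1)

/-- Embedding of real scalars into `R[d]`. -/
noncomputable def cst (x : ℝ) : Polynomial R2 := Polynomial.C (MvPolynomial.C x)

/-- The dividend `P_{n,h}` with `λ = 1` (an element of `ℝ[j,k][d]`). -/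
noncomputable def Pnh (n h : ℕ) (th : ℝ) : Polynomial R2 :=
  (X - 2 * Jv - 1) * (X + 2 * (h : Polynomial R2) - 2 * Jv - 1) * rfp (X - Jv) h *
    rfp (cst (1 - th) * X - Jv) h *
    rfp (cst th * X + (h : Polynomial R2) - (n : Polynomial R2) - Jv + Kv) n *
    rfp (cst th * X + (h : Polynomial R2) - (n : Polynomial R2) - Jv + Kv) n

/-- The divisor `D_{n,h,h−1}` with `λ = 1` (case `l = h−1`). -/
noncomputable def Dnh (n h : ℕ) (th : ℝ) : Polynomial R2 :=
  cst th * X ^ h * (X + (h : Polynomial R2) - 2 * Jv - 1) *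
    rfp (cst th * X - Jv) h *
    rfp (X - (n : Polynomial R2) + (h : Polynomial R2) - 2 * Jv - 1 + Kv) (n + h + 1)

noncomputable abbrev PP := Polynomial (Polynomial ℝ)

/-- weight bound: coefficient of d^i t^j vanishes when i+j > W -/
def Wle (W : ℕ) (f : PP) : Prop := ∀ i j, W < i + j → (f.coeff i).coeff j = 0

lemma Wle_mono {W W' : ℕ} {f : PP} (h : Wle W f) (hW : W ≤ W') : Wle W' f := by
  intro i j hij; exact h i j (by omega)

lemma Wle_zero (W : ℕ) : Wle W 0 := by intro i j _; simp

lemma Wle_add {W : ℕ} {f g : PP} (hf : Wle W f) (hg : Wle W g) : Wle W (f + g) := by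
  intro i j hij; simp [hf i j hij, hg i j hij]

lemma Wle_sub {W : ℕ} {f g : PP} (hf : Wle W f) (hg : Wle W g) : Wle W (f - g) := by
  intro i j hij; simp [hf i j hij, hg i j hij]

lemma Wle_CC (W : ℕ) (a : ℝ) : Wle W (Polynomial.C (Polynomial.C a)) := by
  intro i j hij
  rcases Nat.eq_zero_or_pos i with hi | hi
  · subst hi
    simp [Polynomial.coeff_C, show j ≠ 0 by omega]
  · simp [Polynomial.coeff_C, show i ≠ 0 by omega]

lemma Wle_mul {A B : ℕ} {f g : PP} (hf : Wle A f) (hg : Wle B g) : Wle (A + B) (f * g) := by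
  intro i j hij
  rw [Polynomial.coeff_mul, Polynomial.finset_sum_coeff]
  apply Finset.sum_eq_zero
  rintro ⟨a, b⟩ hab
  rw [Finset.HasAntidiagonal.mem_antidiagonal] at hab
  rw [Polynomial.coeff_mul]
  apply Finset.sum_eq_zero
  rintro ⟨c, e⟩ hce
  rw [Finset.HasAntidiagonal.mem_antidiagonal] at hce
  by_cases hac : A < a + c
  · rw [hf a c hac, zero_mul]
  · rw [hg b e (by omega), mul_zero]

lemma Wle_C_mul_X_pow {L : Polynomial ℝ} {e w : ℕ}
    (hL : ∀ j, w < e + j → L.coeff j = 0) :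
    Wle w (Polynomial.C L * Polynomial.X ^ e) := by
  intro i j hij
  rw [Polynomial.coeff_C_mul, Polynomial.coeff_X_pow]
  by_cases hie : i = e
  · subst hie; rw [if_pos rfl, mul_one]; exact hL j hij
  · rw [if_neg hie, mul_zero]; simp

/-- top-weight component, dehomogenized: coefficient of x^i is the (d^i t^(W-i))-coeff of f. -/
noncomputable def Tc (W : ℕ) (f : PP) : Polynomial ℝ :=
  ∑ i ∈ Finset.range (W + 1), Polynomial.C ((f.coeff i).coeff (W - i)) * Polynomial.X ^ i

lemma Tc_coeff (W : ℕ) (f : PP) (i : ℕ) :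
    (Tc W f).coeff i = if i ≤ W then (f.coeff i).coeff (W - i) else 0 := by
  rw [Tc, Polynomial.finset_sum_coeff]
  by_cases hi : i ≤ W
  · rw [if_pos hi]
    rw [Finset.sum_eq_single i]
    · simp
    · intro b _ hb
      rw [Polynomial.coeff_C_mul, Polynomial.coeff_X_pow, if_neg (Ne.symm hb), mul_zero]
    · intro hmem; exact absurd (Finset.mem_range.2 (by omega)) hmem
  · rw [if_neg hi]
    apply Finset.sum_eq_zero
    intro b hb
    rw [Finset.mem_range] at hb
    rw [Polynomial.coeff_C_mul, Polynomial.coeff_X_pow, if_neg (by omega), mul_zero]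

lemma Tc_add (W : ℕ) (f g : PP) : Tc W (f + g) = Tc W f + Tc W g := by
  ext i
  simp only [Tc_coeff, Polynomial.coeff_add]
  split <;> simp

lemma Tc_mul {A B : ℕ} {f g : PP} (hf : Wle A f) (hg : Wle B g) :
    Tc (A + B) (f * g) = Tc A f * Tc B g := by
  ext i
  rw [Tc_coeff]
  by_cases hi : i ≤ A + B
  · rw [if_pos hi,
      show ((f * g).coeff i) = ∑ ab ∈ Finset.HasAntidiagonal.antidiagonal i, f.coeff ab.1 * g.coeff ab.2 from
        Polynomial.coeff_mul f g i,
      Polynomial.finset_sum_coeff, Polynomial.coeff_mul (Tc A f) (Tc B g) i]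
    apply Finset.sum_congr rfl
    rintro ⟨a, b⟩ hab
    rw [Finset.HasAntidiagonal.mem_antidiagonal] at hab
    simp only at hab ⊢
    rw [Polynomial.coeff_mul, Tc_coeff, Tc_coeff]
    by_cases ha : a ≤ A
    · by_cases hb : b ≤ B
      · rw [if_pos ha, if_pos hb]
        apply Finset.sum_eq_single_of_mem (A - a, B - b)
          (Finset.HasAntidiagonal.mem_antidiagonal.2 (by omega))
        rintro ⟨c, e⟩ hce hne
        rw [Finset.HasAntidiagonal.mem_antidiagonal] at hce
        simp only at hce
        have hcne : ¬(c = A - a ∧ e = B - b) := by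
          rintro ⟨h1, h2⟩; exact hne (by simp [h1, h2])
        by_cases hac : A < a + c
        · rw [hf a c hac, zero_mul]
        · rw [hg b e (by omega), mul_zero]
      · rw [if_neg hb, mul_zero]
        apply Finset.sum_eq_zero
        rintro ⟨c, e⟩ hce
        rw [Finset.HasAntidiagonal.mem_antidiagonal] at hce
        simp only at hce
        by_cases hac : A < a + c
        · rw [hf a c hac, zero_mul]
        · rw [hg b e (by omega), mul_zero]
    · rw [if_neg ha, zero_mul]
      apply Finset.sum_eq_zero
      rintro ⟨c, e⟩ _
      rw [hf a c (by omega), zero_mul]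
  · rw [if_neg hi, Polynomial.coeff_mul]
    symm
    apply Finset.sum_eq_zero
    rintro ⟨a, b⟩ hab
    rw [Finset.HasAntidiagonal.mem_antidiagonal] at hab
    simp only at hab
    rw [Tc_coeff, Tc_coeff]
    by_cases ha : a ≤ A
    · rw [if_neg (show ¬ b ≤ B by omega), mul_zero]
    · rw [if_neg ha, zero_mul]
lemma Tc_degree_lt {W N : ℕ} {f : PP} (h : f.degree < (N : WithBot ℕ)) :
    (Tc W f).degree < (N : WithBot ℕ) := by
  rw [Polynomial.degree_lt_iff_coeff_zero] at h ⊢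
  intro m hm
  rw [Tc_coeff]
  by_cases hmW : m ≤ W
  · rw [if_pos hmW, h m hm]; simp
  · rw [if_neg hmW]

lemma exists_div_wle {M : PP} (hM : M.Monic) {N : ℕ} (hN1 : 1 ≤ N) (hMdeg : M.natDegree = N)
    (hMw : Wle N M) {W : ℕ} (hNW : N ≤ W) :
    ∀ (b : ℕ) (P : PP), P.natDegree ≤ b → Wle W P →
      ∃ q r, P = M * q + r ∧ r.degree < M.degree ∧ Wle (W - N) q := by
  have hMdeg' : M.degree = (N : WithBot ℕ) := by
    rw [Polynomial.degree_eq_natDegree hM.ne_zero, hMdeg]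
  intro b
  induction b with
  | zero =>
    intro P hPb hPw
    refine ⟨0, P, by ring, ?_, Wle_zero _⟩
    calc P.degree ≤ (P.natDegree : WithBot ℕ) := Polynomial.degree_le_natDegree
    _ < (N : WithBot ℕ) := by exact_mod_cast (by omega : P.natDegree < N)
    _ = M.degree := hMdeg'.symm
  | succ b ih =>
    intro P hPb hPw
    by_cases hlt : P.degree < M.degree
    · exact ⟨0, P, by ring, hlt, Wle_zero _⟩
    push_neg at hlt
    have hP0 : P ≠ 0 := by
      intro hP0
      rw [hP0, Polynomial.degree_zero] at hlt
      rw [hMdeg'] at hlt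
      exact absurd hlt (by simp)
    have hPdeg' : P.degree = (P.natDegree : WithBot ℕ) := Polynomial.degree_eq_natDegree hP0
    have hNP : N ≤ P.natDegree := by
      rw [hMdeg', hPdeg'] at hlt; exact_mod_cast hlt
    have hL : P.leadingCoeff ≠ 0 := Polynomial.leadingCoeff_ne_zero.2 hP0
    obtain ⟨j₀, hj₀⟩ : ∃ j, P.leadingCoeff.coeff j ≠ 0 := by
      by_contra hc
      push_neg at hc
      exact hL (Polynomial.ext fun j => by rw [hc j, Polynomial.coeff_zero])
    have hPW : P.natDegree ≤ W := by
      by_contra hc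
      exact hj₀ (hPw P.natDegree j₀ (by omega))
    set e : ℕ := P.natDegree - N with he
    set L : Polynomial ℝ := P.leadingCoeff with hLdef
    have hmonw : Wle (W - N) (Polynomial.C L * Polynomial.X ^ e) := by
      apply Wle_C_mul_X_pow
      intro j hj
      exact hPw P.natDegree j (by omega)
    set G : PP := (Polynomial.C L * Polynomial.X ^ e) * M with hGdef
    have hGdeg : P.degree = G.degree := by
      rw [hM.degree_mul, Polynomial.degree_C_mul_X_pow e hL, hMdeg', hPdeg']
      rw [← Nat.cast_add]
      congr 1
      omega
    have hGlc : P.leadingCoeff = G.leadingCoeff := by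
      rw [hGdef, Polynomial.leadingCoeff_mul, hM.leadingCoeff, mul_one,
        Polynomial.leadingCoeff_mul, Polynomial.leadingCoeff_C, Polynomial.leadingCoeff_X_pow,
        mul_one]
    have hsub : (P - G).degree < P.degree := Polynomial.degree_sub_lt hGdeg hP0 hGlc
    have hP'b : (P - G).natDegree ≤ b := by
      by_cases hPG : P - G = 0
      · rw [hPG]; simp
      · have := Polynomial.natDegree_lt_natDegree hPG hsub
        omega
    have hP'w : Wle W (P - G) := by
      apply Wle_sub hPw
      have := Wle_mul hmonw hMw
      rwa [show W - N + N = W by omega] at this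
    obtain ⟨q', r', hdec, hrdeg, hq'w⟩ := ih (P - G) hP'b hP'w
    exact ⟨Polynomial.C L * Polynomial.X ^ e + q', r', by linear_combination hdec,
      hrdeg, Wle_add hmonw hq'w⟩
noncomputable def lin (α β γ : ℝ) : PP :=
  Polynomial.C (Polynomial.C α) * Polynomial.X +
    Polynomial.C (Polynomial.C β + Polynomial.C γ * Polynomial.X)

noncomputable def rfpl (α β γ : ℝ) (m : ℕ) : PP :=
  ∏ i ∈ Finset.range m, lin α (β + i) γ

lemma lin_coeff (α β γ : ℝ) (i : ℕ) :
    (lin α β γ).coeff i = if i = 0 then Polynomial.C β + Polynomial.C γ * Polynomial.X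
      else if i = 1 then Polynomial.C α else 0 := by
  rcases i with _ | _ | i <;>
    simp [lin, Polynomial.coeff_C, Polynomial.coeff_X]

lemma Wle_lin (α β γ : ℝ) : Wle 1 (lin α β γ) := by
  intro i j hij
  rw [lin_coeff]
  rcases i with _ | _ | i
  · rw [if_pos rfl]
    have hj : j ≠ 0 ∧ j ≠ 1 := by omega
    simp [Polynomial.coeff_C, Polynomial.coeff_X, hj.1, hj.2, Ne.symm hj.2]
  · rw [if_neg (by omega), if_pos rfl, Polynomial.coeff_C, if_neg (by omega)]
  · rw [if_neg (by omega), if_neg (by omega)]; simp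

lemma Tc_lin (α β γ : ℝ) : Tc 1 (lin α β γ) = Polynomial.C α * Polynomial.X + Polynomial.C γ := by
  ext i
  rw [Tc_coeff]
  rcases i with _ | _ | i <;>
    simp [lin_coeff, Polynomial.coeff_C, Polynomial.coeff_X]

lemma lin_degree {α : ℝ} (hα : α ≠ 0) (β γ : ℝ) : (lin α β γ).degree = 1 :=
  Polynomial.degree_linear (by simpa using hα)

lemma lin_leadingCoeff {α : ℝ} (hα : α ≠ 0) (β γ : ℝ) :
    (lin α β γ).leadingCoeff = Polynomial.C α :=
  Polynomial.leadingCoeff_linear (by simpa using hα)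

lemma lin_ne_zero {α : ℝ} (hα : α ≠ 0) (β γ : ℝ) : lin α β γ ≠ 0 := by
  intro hc
  have := lin_degree hα β γ
  rw [hc, Polynomial.degree_zero] at this
  exact absurd this (by simp)

lemma lin_natDegree {α : ℝ} (hα : α ≠ 0) (β γ : ℝ) : (lin α β γ).natDegree = 1 :=
  Polynomial.natDegree_eq_of_degree_eq_some (lin_degree hα β γ)

lemma Wle_rfpl (α β γ : ℝ) (m : ℕ) : Wle m (rfpl α β γ m) := by
  induction m with
  | zero =>
    rw [rfpl, Finset.range_zero, Finset.prod_empty, show (1 : PP) = Polynomial.C (Polynomial.C 1) by simp]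
    exact Wle_CC 0 1
  | succ m ih =>
    rw [rfpl, Finset.prod_range_succ]
    exact Wle_mul ih (Wle_lin _ _ _)

lemma Tc_rfpl (α β γ : ℝ) (m : ℕ) :
    Tc m (rfpl α β γ m) = (Polynomial.C α * Polynomial.X + Polynomial.C γ) ^ m := by
  induction m with
  | zero =>
    rw [rfpl, Finset.range_zero, Finset.prod_empty, pow_zero]
    ext i
    rcases i with _ | i <;> simp [Tc_coeff, Polynomial.coeff_one]
  | succ m ih =>
    rw [rfpl, Finset.prod_range_succ, show m + 1 = m + 1 from rfl]
    rw [← rfpl]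
    rw [Tc_mul (Wle_rfpl α β γ m) (Wle_lin α (β + m) γ), ih, Tc_lin, pow_succ]

lemma rfpl_ne_zero {α : ℝ} (hα : α ≠ 0) (β γ : ℝ) (m : ℕ) : rfpl α β γ m ≠ 0 := by
  rw [rfpl]
  exact Finset.prod_ne_zero_iff.2 fun i _ => lin_ne_zero hα _ _

lemma rfpl_natDegree {α : ℝ} (hα : α ≠ 0) (β γ : ℝ) (m : ℕ) :
    (rfpl α β γ m).natDegree = m := by
  induction m with
  | zero => simp [rfpl]
  | succ m ih =>
    rw [rfpl, Finset.prod_range_succ, ← rfpl,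
      Polynomial.natDegree_mul (rfpl_ne_zero hα β γ m) (lin_ne_zero hα _ _), ih,
      lin_natDegree hα]

lemma rfpl_leadingCoeff {α : ℝ} (hα : α ≠ 0) (β γ : ℝ) (m : ℕ) :
    (rfpl α β γ m).leadingCoeff = Polynomial.C (α ^ m) := by
  induction m with
  | zero => simp [rfpl]
  | succ m ih =>
    rw [rfpl, Finset.prod_range_succ, ← rfpl, Polynomial.leadingCoeff_mul, ih,
      lin_leadingCoeff hα, pow_succ, map_mul]

lemma Wle_X_pow (e : ℕ) : Wle e (Polynomial.X ^ e : PP) := by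
  have h := Wle_C_mul_X_pow (L := (1 : Polynomial ℝ)) (e := e) (w := e)
    (fun j hj => by rw [Polynomial.coeff_one, if_neg (by omega)])
  rwa [map_one, one_mul] at h

lemma Tc_X_pow (e : ℕ) : Tc e (Polynomial.X ^ e : PP) = Polynomial.X ^ e := by
  ext i
  rw [Tc_coeff]
  by_cases hi : i ≤ e
  · rw [if_pos hi]
    by_cases hie : i = e
    · subst hie; simp [Polynomial.coeff_X_pow]
    · simp [Polynomial.coeff_X_pow, hie]
  · rw [if_neg hi, Polynomial.coeff_X_pow, if_neg (by omega)]

lemma map_rfp {S T : Type*} [CommRing S] [CommRing T] (φ : S →+* T) (a : S) (m : ℕ) :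
    φ (rfp a m) = rfp (φ a) m := by
  simp [rfp, map_prod, map_add, map_natCast]

lemma lin_add_nat (α β γ : ℝ) (i : ℕ) : lin α β γ + (i : PP) = lin α (β + i) γ := by
  rw [show ((i : ℕ) : PP) = Polynomial.C (Polynomial.C (i : ℝ)) by simp [map_natCast]]
  simp only [lin, map_add]
  ring

lemma rfp_lin (α β γ : ℝ) (m : ℕ) : rfp (lin α β γ) m = rfpl α β γ m := by
  rw [rfp, rfpl]
  exact Finset.prod_congr rfl fun i _ => lin_add_nat α β γ i
noncomputable def sN (n : ℕ) (θ : ℝ) (i : ℕ) : ℝ :=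
  ((2*n).choose i : ℝ) * θ^i * (1-θ)^(2*n - i)

noncomputable def qzero (n h : ℕ) (θ : ℝ) : Polynomial ℝ :=
  ∑ i ∈ Finset.range (2*n+1), Polynomial.C (sN n θ i) *
    ((if n+h ≤ i then (X+1)^(i-(n+h)) else 0) - (if n+h+1 ≤ i then (X+1)^(i-(n+h+1)) else 0))

noncomputable def rzero (n h : ℕ) (θ : ℝ) : Polynomial ℝ :=
  ∑ i ∈ Finset.range (2*n+1), Polynomial.C (sN n θ i) *
    ((if i < n+h then (X+1)^(i+1) else 0) - (if i < n+h+1 then (X+1)^i else 0))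

lemma core_expand (n : ℕ) (θ : ℝ) :
    Polynomial.X * (Polynomial.C θ * Polynomial.X + 1)^(2*n) =
      ∑ i ∈ Finset.range (2*n+1),
        Polynomial.C (sN n θ i) * ((Polynomial.X+1)^(i+1) - (Polynomial.X+1)^i) := by
  have h1 : (Polynomial.C θ * Polynomial.X + 1 : Polynomial ℝ)
      = Polynomial.C θ * (Polynomial.X + 1) + Polynomial.C (1-θ) := by
    rw [map_sub, map_one]; ring
  rw [h1, add_pow, Finset.mul_sum]
  apply Finset.sum_congr rfl
  intro i hi
  rw [mul_pow, ← map_pow, ← map_pow,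
    show ((((2*n).choose i) : ℕ) : Polynomial ℝ)
      = Polynomial.C (((2*n).choose i : ℕ) : ℝ) by simp]
  simp only [sN, map_mul]
  ring

lemma core_identity (n h : ℕ) (hhn : h ≤ n) (θ : ℝ) :
    Polynomial.X * (Polynomial.C θ * Polynomial.X + 1)^(2*n)
      = (Polynomial.X+1)^(n+h+1) * qzero n h θ + rzero n h θ := by
  rw [core_expand, qzero, rzero, Finset.mul_sum, ← Finset.sum_add_distrib]
  apply Finset.sum_congr rfl
  intro i _
  by_cases h1 : n + h ≤ i
  · by_cases h2 : n + h + 1 ≤ i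
    · rw [if_pos h1, if_pos h2, if_neg (by omega), if_neg (by omega)]
      rw [show (Polynomial.X + 1 : Polynomial ℝ)^(i+1)
          = (Polynomial.X+1)^(n+h+1) * (Polynomial.X+1)^(i-(n+h)) by
            rw [← pow_add]; congr 1; omega,
        show (Polynomial.X + 1 : Polynomial ℝ)^i
          = (Polynomial.X+1)^(n+h+1) * (Polynomial.X+1)^(i-(n+h+1)) by
            rw [← pow_add]; congr 1; omega]
      ring
    · have hieq : i = n + h := by omega
      subst hieq
      rw [if_pos h1, if_neg h2, if_neg (by omega), if_pos (by omega)]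
      simp only [Nat.sub_self, pow_zero]
      ring
  · rw [if_neg h1, if_neg (by omega), if_pos (by omega), if_pos (by omega)]
    ring

lemma degXp1 (m : ℕ) : ((Polynomial.X + 1 : Polynomial ℝ)^m).degree = (m : WithBot ℕ) := by
  have hm : ((Polynomial.X + 1 : Polynomial ℝ)^m).Monic := by
    have : (Polynomial.X + 1 : Polynomial ℝ) = Polynomial.X + Polynomial.C 1 := by rw [map_one]
    rw [this]
    exact (Polynomial.monic_X_add_C 1).pow m
  rw [Polynomial.degree_eq_natDegree hm.ne_zero]
  congr 1
  rw [Polynomial.natDegree_pow]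
  rw [show (Polynomial.X + 1 : Polynomial ℝ) = Polynomial.X + Polynomial.C 1 by rw [map_one]]
  rw [Polynomial.natDegree_X_add_C]
  omega

lemma rzero_degree (n h : ℕ) (θ : ℝ) :
    (rzero n h θ).degree ≤ ((n+h : ℕ) : WithBot ℕ) := by
  refine le_trans (Polynomial.degree_sum_le _ _) (Finset.sup_le fun i hi => ?_)
  refine le_trans (Polynomial.degree_mul_le _ _) ?_
  have hC : (Polynomial.C (sN n θ i)).degree ≤ (0 : WithBot ℕ) := Polynomial.degree_C_le
  have hB : ((if i < n+h then (Polynomial.X+1 : Polynomial ℝ)^(i+1) else 0)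
      - (if i < n+h+1 then (Polynomial.X+1)^i else 0)).degree ≤ ((n+h : ℕ) : WithBot ℕ) := by
    refine le_trans (Polynomial.degree_sub_le _ _) (max_le ?_ ?_)
    · split
      · rw [degXp1]; exact_mod_cast (by omega : i + 1 ≤ n + h)
      · rw [Polynomial.degree_zero]; exact bot_le
    · split
      · rw [degXp1]; exact_mod_cast (by omega : i ≤ n + h)
      · rw [Polynomial.degree_zero]; exact bot_le
  calc (Polynomial.C (sN n θ i)).degree + _ ≤ 0 + ((n+h:ℕ) : WithBot ℕ) := add_le_add hC hB
  _ = ((n+h:ℕ) : WithBot ℕ) := zero_add _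

lemma qzero_coeff0 (n h : ℕ) (hhn : h ≤ n) (θ : ℝ) :
    (qzero n h θ).coeff 0 = sN n θ (n+h) := by
  rw [Polynomial.coeff_zero_eq_eval_zero, qzero, Polynomial.eval_finset_sum]
  rw [Finset.sum_eq_single_of_mem (n+h) (Finset.mem_range.2 (by omega))]
  · simp [if_neg (by omega : ¬ n+h+1 ≤ n+h)]
  · intro b _ hb
    by_cases h1 : n + h ≤ b
    · have h2 : n + h + 1 ≤ b := by omega
      simp [if_pos h1, if_pos h2, show n + h < b by omega]
    · simp [if_neg h1, if_neg (by omega : ¬ n+h+1 ≤ b), show ¬ n + h < b by omega]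
noncomputable def piR : R2 →+* Polynomial ℝ :=
  (MvPolynomial.aeval ![0, Polynomial.X]).toRingHom

lemma piR_X0 : piR (MvPolynomial.X 0) = 0 := by simp [piR]

lemma piR_X1 : piR (MvPolynomial.X 1) = Polynomial.X := by simp [piR]

lemma piR_C (x : ℝ) : piR (MvPolynomial.C x) = Polynomial.C x := by
  simp [piR, Polynomial.algebraMap_eq]

lemma map_Jv : Jv.map piR = 0 := by
  rw [Jv, Polynomial.map_C, piR_X0, map_zero]

lemma map_Kv : Kv.map piR = Polynomial.C Polynomial.X := by
  rw [Kv, Polynomial.map_C, piR_X1]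

lemma map_cst (x : ℝ) : (cst x).map piR = Polynomial.C (Polynomial.C x) := by
  rw [cst, Polynomial.map_C, piR_C]

lemma piR_coeff (σ : R2) (m : ℕ) :
    (piR σ).coeff m = MvPolynomial.coeff (Finsupp.single (1 : Fin 2) m) σ := by
  have : piR σ = MvPolynomial.eval₂ (algebraMap ℝ (Polynomial ℝ)) ![0, Polynomial.X] σ := rfl
  rw [this, MvPolynomial.eval₂_eq, Polynomial.finset_sum_coeff,
    Finset.sum_eq_single (Finsupp.single (1 : Fin 2) m)]
  · by_cases hm : m = 0
    · subst hm
      rw [show (Finsupp.single (1 : Fin 2) 0) = 0 from Finsupp.single_zero 1]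
      simp [Polynomial.algebraMap_eq]
    · rw [Finsupp.support_single_ne_zero _ hm, Finset.prod_singleton]
      simp [Polynomial.algebraMap_eq, Polynomial.coeff_C_mul, Polynomial.coeff_X_pow]
  · intro d _ hd
    by_cases hd0 : d 0 = 0
    · have hdeq : d = Finsupp.single 1 (d 1) := by
        ext i
        fin_cases i
        · simpa [Finsupp.single_apply] using hd0
        · simp [Finsupp.single_apply]
      have hd1 : d 1 ≠ m := fun hc => hd (by rw [hdeq, hc])
      have hprod : (∏ i ∈ d.support, (![0, Polynomial.X] : Fin 2 → Polynomial ℝ) i ^ d i)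
          = Polynomial.X ^ (d 1) := by
        by_cases hd1z : d 1 = 0
        · have : d = 0 := by rw [hdeq, hd1z, Finsupp.single_zero]
          rw [this]
          simp
        · rw [hdeq, Finsupp.support_single_ne_zero _ hd1z, Finset.prod_singleton]
          simp [Finsupp.single_apply]
      rw [hprod, Polynomial.algebraMap_eq, Polynomial.coeff_C_mul, Polynomial.coeff_X_pow,
        if_neg (fun hc => hd1 hc.symm), mul_zero]
    · have h0mem : (0 : Fin 2) ∈ d.support := Finsupp.mem_support_iff.2 hd0
      rw [Finset.prod_eq_zero h0mem (by simp [zero_pow hd0]), mul_zero, Polynomial.coeff_zero]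
  · intro hns
    rw [MvPolynomial.notMem_support_iff] at hns
    rw [hns]
    simp
lemma map_rfp' (a : Polynomial R2) (m : ℕ) : (rfp a m).map piR = rfp (a.map piR) m := by
  simpa using map_rfp (Polynomial.mapRingHom piR) a m

lemma map_Pnh (n h : ℕ) (θ : ℝ) :
    (Pnh n h θ).map piR =
      lin 1 (-1) 0 * lin 1 (2*(h:ℝ)-1) 0 * rfpl 1 0 0 h * rfpl (1-θ) 0 0 h *
        rfpl θ ((h:ℝ)-(n:ℝ)) 1 n * rfpl θ ((h:ℝ)-(n:ℝ)) 1 n := by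
  rw [Pnh]
  simp only [Polynomial.map_mul, map_rfp']
  have e1 : (Polynomial.X - 2*Jv - 1 : Polynomial R2).map piR = lin 1 (-1) 0 := by
    simp only [Polynomial.map_sub, Polynomial.map_mul, Polynomial.map_ofNat,
      Polynomial.map_one, Polynomial.map_X, map_Jv]
    simp only [lin, map_sub, map_add, map_mul, map_one, map_zero, map_neg, map_natCast, map_ofNat, zero_mul, mul_zero, add_zero, zero_add, one_mul, mul_one]
    ring
  have e2 : (Polynomial.X + 2*((h:ℕ):Polynomial R2) - 2*Jv - 1).map piR
      = lin 1 (2*(h:ℝ)-1) 0 := by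
    simp only [Polynomial.map_sub, Polynomial.map_add, Polynomial.map_mul,
      Polynomial.map_ofNat, Polynomial.map_one, Polynomial.map_X, Polynomial.map_natCast, map_Jv]
    simp only [lin, map_sub, map_add, map_mul, map_one, map_zero, map_neg, map_natCast, map_ofNat, zero_mul, mul_zero, add_zero, zero_add, one_mul, mul_one]
    ring
  have e3 : (Polynomial.X - Jv).map piR = lin 1 0 0 := by
    simp only [Polynomial.map_sub, Polynomial.map_X, map_Jv]
    simp only [lin, map_sub, map_add, map_mul, map_one, map_zero, map_neg, map_natCast, map_ofNat, zero_mul, mul_zero, add_zero, zero_add, one_mul, mul_one]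
    ring
  have e4 : (cst (1-θ) * Polynomial.X - Jv).map piR = lin (1-θ) 0 0 := by
    simp only [Polynomial.map_sub, Polynomial.map_mul, Polynomial.map_X, map_Jv, map_cst]
    simp only [lin, map_sub, map_add, map_mul, map_one, map_zero, map_neg, map_natCast, map_ofNat, zero_mul, mul_zero, add_zero, zero_add, one_mul, mul_one]
    ring
  have e5 : (cst θ * Polynomial.X + ((h:ℕ):Polynomial R2) - ((n:ℕ):Polynomial R2) - Jv
      + Kv).map piR = lin θ ((h:ℝ)-(n:ℝ)) 1 := by
    simp only [Polynomial.map_sub, Polynomial.map_add, Polynomial.map_mul, Polynomial.map_X,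
      Polynomial.map_natCast, map_Jv, map_Kv, map_cst]
    simp only [lin, map_sub, map_add, map_mul, map_one, map_zero, map_neg, map_natCast, map_ofNat, zero_mul, mul_zero, add_zero, zero_add, one_mul, mul_one]
    ring
  rw [e1, e2, e3, e4, e5, rfp_lin, rfp_lin, rfp_lin]

lemma map_Dnh (n h : ℕ) (θ : ℝ) :
    (Dnh n h θ).map piR =
      Polynomial.C (Polynomial.C θ) * Polynomial.X^h * lin 1 ((h:ℝ)-1) 0 *
        rfpl θ 0 0 h * rfpl 1 ((h:ℝ)-(n:ℝ)-1) 1 (n+h+1) := by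
  rw [Dnh]
  simp only [Polynomial.map_mul, map_rfp', Polynomial.map_pow, Polynomial.map_X, map_cst]
  have e2 : (Polynomial.X + ((h:ℕ):Polynomial R2) - 2*Jv - 1).map piR
      = lin 1 ((h:ℝ)-1) 0 := by
    simp only [Polynomial.map_sub, Polynomial.map_add, Polynomial.map_mul,
      Polynomial.map_ofNat, Polynomial.map_one, Polynomial.map_X, Polynomial.map_natCast, map_Jv]
    simp only [lin, map_sub, map_add, map_mul, map_one, map_zero, map_neg, map_natCast, map_ofNat, zero_mul, mul_zero, add_zero, zero_add, one_mul, mul_one]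
    ring
  have e3 : (cst θ * Polynomial.X - Jv).map piR = lin θ 0 0 := by
    simp only [Polynomial.map_sub, Polynomial.map_mul, Polynomial.map_X, map_Jv, map_cst]
    simp only [lin, map_sub, map_add, map_mul, map_one, map_zero, map_neg, map_natCast, map_ofNat, zero_mul, mul_zero, add_zero, zero_add, one_mul, mul_one]
    ring
  have e4 : (Polynomial.X - ((n:ℕ):Polynomial R2) + ((h:ℕ):Polynomial R2) - 2*Jv - 1
      + Kv).map piR = lin 1 ((h:ℝ)-(n:ℝ)-1) 1 := by
    simp only [Polynomial.map_sub, Polynomial.map_add, Polynomial.map_mul,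
      Polynomial.map_ofNat, Polynomial.map_one, Polynomial.map_X, Polynomial.map_natCast,
      map_Jv, map_Kv]
    simp only [lin, map_sub, map_add, map_mul, map_one, map_zero, map_neg, map_natCast, map_ofNat, zero_mul, mul_zero, add_zero, zero_add, one_mul, mul_one]
    ring
  rw [e2, e3, e4, rfp_lin, rfp_lin]
lemma Tc_CC (a : ℝ) : Tc 0 (Polynomial.C (Polynomial.C a)) = Polynomial.C a := by
  ext i
  rw [Tc_coeff]
  rcases i with _ | i
  · simp
  · simp [Polynomial.coeff_C]


/-- For `λ = 1`, the coefficient `c^{(1,θ)}_{n,h,h−1}` of the monomial `k^{n−h}` in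
`q^{(n,h)}_{n−h} = Q.coeff 0` equals `(1−θ)^n θ^{n−1} C(2n, n−h)`. -/
theorem stmt_14 (n h : ℕ) (hn : 1 ≤ n) (hh1 : 1 ≤ h) (hhn : h ≤ n)
    (th : ℝ) (hth0 : 0 < th) (hth1 : th < 1)
    (Q Rem : Polynomial R2)
    (hdiv : Pnh n h th = Dnh n h th * Q + Rem)
    (hRem : Rem.degree < ((n + 3 * h + 2 : ℕ) : WithBot ℕ)) :
    MvPolynomial.coeff (Finsupp.single (1 : Fin 2) (n - h)) (Q.coeff 0)
      = (1 - th) ^ n * th ^ (n - 1) * ((2 * n).choose (n - h) : ℝ) := by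
  classical
  have hθ : th ≠ 0 := ne_of_gt hth0
  have hθ1 : (1 : ℝ) - th ≠ 0 := by linarith
  -- mapped division identity
  have hdiv₁ : (Pnh n h th).map piR = (Dnh n h th).map piR * Q.map piR + Rem.map piR := by
    rw [hdiv, Polynomial.map_add, Polynomial.map_mul]
  -- weight bound and top part for P
  have wP : Wle (2*n+2*h+2) ((Pnh n h th).map piR) := by
    rw [map_Pnh]
    exact Wle_mono
      (Wle_mul (Wle_mul (Wle_mul (Wle_mul (Wle_mul (Wle_lin _ _ _) (Wle_lin _ _ _))
        (Wle_rfpl _ _ _ _)) (Wle_rfpl _ _ _ _)) (Wle_rfpl _ _ _ _)) (Wle_rfpl _ _ _ _))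
      (by omega)
  have tP : Tc (2*n+2*h+2) ((Pnh n h th).map piR)
      = Polynomial.C ((1-th)^h) * Polynomial.X^(2*h+2)
        * (Polynomial.C th * Polynomial.X + 1)^(2*n) := by
    rw [map_Pnh, show 2*n+2*h+2 = ((((1+1)+h)+h)+n)+n by omega,
      Tc_mul (Wle_mul (Wle_mul (Wle_mul (Wle_mul (Wle_lin _ _ _) (Wle_lin _ _ _))
        (Wle_rfpl _ _ _ _)) (Wle_rfpl _ _ _ _)) (Wle_rfpl _ _ _ _)) (Wle_rfpl _ _ _ _),
      Tc_mul (Wle_mul (Wle_mul (Wle_mul (Wle_lin _ _ _) (Wle_lin _ _ _))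
        (Wle_rfpl _ _ _ _)) (Wle_rfpl _ _ _ _)) (Wle_rfpl _ _ _ _),
      Tc_mul (Wle_mul (Wle_mul (Wle_lin _ _ _) (Wle_lin _ _ _)) (Wle_rfpl _ _ _ _))
        (Wle_rfpl _ _ _ _),
      Tc_mul (Wle_mul (Wle_lin _ _ _) (Wle_lin _ _ _)) (Wle_rfpl _ _ _ _),
      Tc_mul (Wle_lin _ _ _) (Wle_lin _ _ _),
      Tc_lin, Tc_lin, Tc_rfpl, Tc_rfpl, Tc_rfpl]
    simp only [map_zero, map_one, add_zero, one_mul]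
    rw [mul_pow, ← map_pow, show 2*n = n + n by omega, pow_add]
    ring
  -- weight bound and top part for D
  have wD : Wle (n+3*h+2) ((Dnh n h th).map piR) := by
    rw [map_Dnh]
    exact Wle_mono
      (Wle_mul (Wle_mul (Wle_mul (Wle_mul (Wle_CC 0 th) (Wle_X_pow h)) (Wle_lin _ _ _))
        (Wle_rfpl _ _ _ _)) (Wle_rfpl _ _ _ _))
      (by omega)
  have tD : Tc (n+3*h+2) ((Dnh n h th).map piR)
      = Polynomial.C (th^(h+1)) *
        (Polynomial.X^(2*h+1) * (Polynomial.X+1)^(n+h+1)) := by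
    rw [map_Dnh, show n+3*h+2 = (((0+h)+1)+h)+(n+h+1) by omega,
      Tc_mul (Wle_mul (Wle_mul (Wle_mul (Wle_CC 0 th) (Wle_X_pow h)) (Wle_lin _ _ _))
        (Wle_rfpl _ _ _ _)) (Wle_rfpl _ _ _ _),
      Tc_mul (Wle_mul (Wle_mul (Wle_CC 0 th) (Wle_X_pow h)) (Wle_lin _ _ _))
        (Wle_rfpl _ _ _ _),
      Tc_mul (Wle_mul (Wle_CC 0 th) (Wle_X_pow h)) (Wle_lin _ _ _),
      Tc_mul (Wle_CC 0 th) (Wle_X_pow h),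
      Tc_CC, Tc_X_pow, Tc_lin, Tc_rfpl, Tc_rfpl]
    simp only [map_zero, map_one, add_zero, one_mul]
    rw [mul_pow, ← map_pow, show th^(h+1) = th * th^h from pow_succ' th h, map_mul]
    ring
  -- nonvanishing, degree, leading coefficient of the image of D
  have nz0 : (Polynomial.C (Polynomial.C th) : PP) ≠ 0 := by
    simp only [ne_eq, Polynomial.C_eq_zero]; exact hθ
  have nz1 : (Polynomial.X^h : PP) ≠ 0 := pow_ne_zero _ Polynomial.X_ne_zero
  have nz2 : lin 1 ((h:ℝ)-1) 0 ≠ 0 := lin_ne_zero one_ne_zero _ _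
  have nz3 : rfpl th 0 0 h ≠ 0 := rfpl_ne_zero hθ _ _ _
  have nz4 : rfpl 1 ((h:ℝ)-(n:ℝ)-1) 1 (n+h+1) ≠ 0 := rfpl_ne_zero one_ne_zero _ _ _
  have hDne : (Dnh n h th).map piR ≠ 0 := by
    rw [map_Dnh]
    exact mul_ne_zero (mul_ne_zero (mul_ne_zero (mul_ne_zero nz0 nz1) nz2) nz3) nz4
  have hDdeg : ((Dnh n h th).map piR).natDegree = n+3*h+2 := by
    rw [map_Dnh,
      Polynomial.natDegree_mul (mul_ne_zero (mul_ne_zero (mul_ne_zero nz0 nz1) nz2) nz3) nz4,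
      Polynomial.natDegree_mul (mul_ne_zero (mul_ne_zero nz0 nz1) nz2) nz3,
      Polynomial.natDegree_mul (mul_ne_zero nz0 nz1) nz2,
      Polynomial.natDegree_mul nz0 nz1,
      Polynomial.natDegree_C, Polynomial.natDegree_X_pow,
      lin_natDegree one_ne_zero, rfpl_natDegree hθ, rfpl_natDegree one_ne_zero]
    omega
  have hDlc : ((Dnh n h th).map piR).leadingCoeff = Polynomial.C (th^(h+1)) := by
    rw [map_Dnh, Polynomial.leadingCoeff_mul, Polynomial.leadingCoeff_mul,
      Polynomial.leadingCoeff_mul, Polynomial.leadingCoeff_mul,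
      Polynomial.leadingCoeff_C, (Polynomial.monic_X_pow h).leadingCoeff,
      lin_leadingCoeff one_ne_zero, rfpl_leadingCoeff hθ, rfpl_leadingCoeff one_ne_zero,
      map_one, one_pow, map_one]
    rw [mul_one, mul_one, mul_one, ← map_mul, ← pow_succ']
  -- the monic rescaling M₁
  have hu_ne : ((th^(h+1))⁻¹ : ℝ) ≠ 0 := inv_ne_zero (pow_ne_zero _ hθ)
  have nzu : (Polynomial.C (Polynomial.C ((th^(h+1))⁻¹)) : PP) ≠ 0 := by
    simp only [ne_eq, Polynomial.C_eq_zero]; exact hu_ne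
  have hM1monic : (Polynomial.C (Polynomial.C ((th^(h+1))⁻¹)) * (Dnh n h th).map piR).Monic := by
    rw [Polynomial.Monic, Polynomial.leadingCoeff_mul, hDlc, Polynomial.leadingCoeff_C,
      ← map_mul, inv_mul_cancel₀ (pow_ne_zero _ hθ), map_one]
  have hM1deg : (Polynomial.C (Polynomial.C ((th^(h+1))⁻¹)) * (Dnh n h th).map piR).natDegree
      = n+3*h+2 := by
    rw [Polynomial.natDegree_mul nzu hDne, Polynomial.natDegree_C, hDdeg]
    omega
  have hM1degree : (Polynomial.C (Polynomial.C ((th^(h+1))⁻¹)) * (Dnh n h th).map piR).degree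
      = ((n+3*h+2 : ℕ) : WithBot ℕ) := by
    rw [Polynomial.degree_eq_natDegree hM1monic.ne_zero, hM1deg]
  have wM₁ : Wle (n+3*h+2) (Polynomial.C (Polynomial.C ((th^(h+1))⁻¹)) * (Dnh n h th).map piR) :=
    Wle_mono (Wle_mul (Wle_CC 0 _) wD) (by omega)
  have tM : Tc (n+3*h+2) (Polynomial.C (Polynomial.C ((th^(h+1))⁻¹)) * (Dnh n h th).map piR)
      = Polynomial.X^(2*h+1) * (Polynomial.X+1)^(n+h+1) := by
    have e := Tc_mul (Wle_CC 0 ((th^(h+1))⁻¹)) wD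
    rw [zero_add] at e
    rw [e, Tc_CC, tD, ← mul_assoc, ← map_mul, inv_mul_cancel₀ (pow_ne_zero _ hθ), map_one,
      one_mul]
  -- existence of a weight-controlled quotient
  obtain ⟨q', r', hqr, hrdeg, hq'w⟩ :=
    exists_div_wle hM1monic (by omega) hM1deg wM₁ (W := 2*n+2*h+2) (by omega)
      ((Pnh n h th).map piR).natDegree ((Pnh n h th).map piR) le_rfl wP
  -- uniqueness of quotient
  have hRemdeg₁ : (Rem.map piR).degree
      < (Polynomial.C (Polynomial.C ((th^(h+1))⁻¹)) * (Dnh n h th).map piR).degree := by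
    rw [hM1degree]
    exact lt_of_le_of_lt (Polynomial.degree_map_le) hRem
  have hdiv₂ : Rem.map piR
      + (Polynomial.C (Polynomial.C ((th^(h+1))⁻¹)) * (Dnh n h th).map piR)
        * (Polynomial.C (Polynomial.C (th^(h+1))) * Q.map piR) = (Pnh n h th).map piR := by
    have hCC : (Polynomial.C (Polynomial.C ((th^(h+1))⁻¹)) : PP)
        * Polynomial.C (Polynomial.C (th^(h+1))) = 1 := by
      rw [← map_mul, ← map_mul, inv_mul_cancel₀ (pow_ne_zero _ hθ), map_one, map_one]
    calc Rem.map piR + (Polynomial.C (Polynomial.C ((th^(h+1))⁻¹)) * (Dnh n h th).map piR)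
          * (Polynomial.C (Polynomial.C (th^(h+1))) * Q.map piR)
        = Rem.map piR + (Polynomial.C (Polynomial.C ((th^(h+1))⁻¹))
            * Polynomial.C (Polynomial.C (th^(h+1)))) * ((Dnh n h th).map piR * Q.map piR) := by
          ring
      _ = (Pnh n h th).map piR := by rw [hCC, one_mul, hdiv₁]; ring
  have hu1 := Polynomial.div_modByMonic_unique
    (Polynomial.C (Polynomial.C (th^(h+1))) * Q.map piR) (Rem.map piR) hM1monic
    ⟨hdiv₂, hRemdeg₁⟩
  have hu2 := Polynomial.div_modByMonic_unique (f := (Pnh n h th).map piR) q' r' hM1monic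
    ⟨by linear_combination -hqr, hrdeg⟩
  have hq'eq : q' = Polynomial.C (Polynomial.C (th^(h+1))) * Q.map piR := by
    rw [← hu2.1, hu1.1]
  -- weight bound on quotient and remainder
  have hwq' : Wle (n-h) q' := by
    rwa [show 2*n+2*h+2 - (n+3*h+2) = n - h by omega] at hq'w
  have wr' : Wle (2*n+2*h+2) r' := by
    have hr' : r' = (Pnh n h th).map piR
        - (Polynomial.C (Polynomial.C ((th^(h+1))⁻¹)) * (Dnh n h th).map piR) * q' := by
      linear_combination -hqr
    rw [hr']
    exact Wle_sub wP (Wle_mono (Wle_mul wM₁ hwq') (by omega))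
  -- extracting the top components
  have topEq : Polynomial.C ((1-th)^h) * Polynomial.X^(2*h+2)
      * (Polynomial.C th * Polynomial.X + 1)^(2*n)
      = (Polynomial.X^(2*h+1) * (Polynomial.X+1)^(n+h+1)) * Tc (n-h) q'
        + Tc (2*n+2*h+2) r' := by
    have e := congrArg (Tc (2*n+2*h+2)) hqr
    rw [Tc_add] at e
    have e2 : Tc (2*n+2*h+2)
        ((Polynomial.C (Polynomial.C ((th^(h+1))⁻¹)) * (Dnh n h th).map piR) * q')
        = (Polynomial.X^(2*h+1) * (Polynomial.X+1)^(n+h+1)) * Tc (n-h) q' := by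
      rw [show (2*n+2*h+2 : ℕ) = (n+3*h+2) + (n-h) by omega, Tc_mul wM₁ hwq', tM]
    rw [e2] at e
    rw [← tP, e]
  -- the monic top divisor
  have hXp1monic : ((Polynomial.X+1 : Polynomial ℝ)^(n+h+1)).Monic := by
    rw [show (Polynomial.X+1 : Polynomial ℝ) = Polynomial.X + Polynomial.C 1 by rw [map_one]]
    exact (Polynomial.monic_X_add_C 1).pow _
  have hMtmonic : (Polynomial.X^(2*h+1) * (Polynomial.X+1)^(n+h+1) : Polynomial ℝ).Monic :=
    (Polynomial.monic_X_pow _).mul hXp1monic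
  have hMtdegree : (Polynomial.X^(2*h+1) * (Polynomial.X+1)^(n+h+1) : Polynomial ℝ).degree
      = ((n+3*h+2 : ℕ) : WithBot ℕ) := by
    rw [Polynomial.degree_eq_natDegree hMtmonic.ne_zero,
      Polynomial.natDegree_mul (pow_ne_zero _ Polynomial.X_ne_zero) hXp1monic.ne_zero,
      Polynomial.natDegree_X_pow, Polynomial.natDegree_pow,
      show (Polynomial.X+1 : Polynomial ℝ) = Polynomial.X + Polynomial.C 1 by rw [map_one],
      Polynomial.natDegree_X_add_C]
    congr 1
    omega
  -- uniqueness of the top quotient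
  have hrdegN : r'.degree < ((n+3*h+2 : ℕ) : WithBot ℕ) := by rw [← hM1degree]; exact hrdeg
  have hu3 := Polynomial.div_modByMonic_unique (f := Polynomial.C ((1-th)^h)
      * Polynomial.X^(2*h+2) * (Polynomial.C th * Polynomial.X + 1)^(2*n))
    (Tc (n-h) q') (Tc (2*n+2*h+2) r') hMtmonic
    ⟨by linear_combination -topEq, by rw [hMtdegree]; exact Tc_degree_lt hrdegN⟩
  have hstar : Polynomial.C ((1-th)^h) * Polynomial.X^(2*h+2)
      * (Polynomial.C th * Polynomial.X + 1)^(2*n)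
      = (Polynomial.X^(2*h+1) * (Polynomial.X+1)^(n+h+1))
          * (Polynomial.C ((1-th)^h) * qzero n h th)
        + Polynomial.C ((1-th)^h) * Polynomial.X^(2*h+1) * rzero n h th := by
    have e0 : Polynomial.C ((1-th)^h) * Polynomial.X^(2*h+2)
        * (Polynomial.C th * Polynomial.X + 1)^(2*n)
        = Polynomial.C ((1-th)^h) * Polynomial.X^(2*h+1)
          * (Polynomial.X * (Polynomial.C th * Polynomial.X + 1)^(2*n)) := by
      ring
    rw [e0, core_identity n h hhn th]
    ring
  have hrstardeg : (Polynomial.C ((1-th)^h) * Polynomial.X^(2*h+1) * rzero n h th).degree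
      < ((n+3*h+2 : ℕ) : WithBot ℕ) := by
    have h1 : (Polynomial.C ((1-th)^h) * Polynomial.X^(2*h+1) : Polynomial ℝ).degree
        = ((2*h+1 : ℕ) : WithBot ℕ) := Polynomial.degree_C_mul_X_pow _ (pow_ne_zero _ hθ1)
    calc (Polynomial.C ((1-th)^h) * Polynomial.X^(2*h+1) * rzero n h th).degree
        ≤ (Polynomial.C ((1-th)^h) * Polynomial.X^(2*h+1)).degree + (rzero n h th).degree :=
          Polynomial.degree_mul_le _ _
      _ ≤ ((2*h+1 : ℕ) : WithBot ℕ) + ((n+h : ℕ) : WithBot ℕ) :=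
          add_le_add (le_of_eq h1) (rzero_degree n h th)
      _ = ((n+3*h+1 : ℕ) : WithBot ℕ) := by rw [← Nat.cast_add]; congr 1; omega
      _ < ((n+3*h+2 : ℕ) : WithBot ℕ) := by
          exact_mod_cast (by omega : n+3*h+1 < n+3*h+2)
  have hu4 := Polynomial.div_modByMonic_unique (f := Polynomial.C ((1-th)^h)
      * Polynomial.X^(2*h+2) * (Polynomial.C th * Polynomial.X + 1)^(2*n))
    (Polynomial.C ((1-th)^h) * qzero n h th)
    (Polynomial.C ((1-th)^h) * Polynomial.X^(2*h+1) * rzero n h th) hMtmonic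
    ⟨by linear_combination -hstar, by rw [hMtdegree]; exact hrstardeg⟩
  have hTcq' : Tc (n-h) q' = Polynomial.C ((1-th)^h) * qzero n h th := by
    rw [← hu3.1, hu4.1]
  -- coefficient extraction
  have hkey : th^(h+1) * MvPolynomial.coeff (Finsupp.single (1 : Fin 2) (n - h)) (Q.coeff 0)
      = (1-th)^h * sN n th (n+h) := by
    have c1 : (Tc (n-h) q').coeff 0 = (q'.coeff 0).coeff (n-h) := by
      rw [Tc_coeff, if_pos (Nat.zero_le _), Nat.sub_zero]
    have c2 : (q'.coeff 0).coeff (n-h)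
        = th^(h+1) * ((Q.map piR).coeff 0).coeff (n-h) := by
      rw [hq'eq, Polynomial.coeff_C_mul, Polynomial.coeff_C_mul]
    have c3 : ((Q.map piR).coeff 0).coeff (n-h)
        = MvPolynomial.coeff (Finsupp.single (1 : Fin 2) (n - h)) (Q.coeff 0) := by
      rw [Polynomial.coeff_map, piR_coeff]
    have c4 : (Tc (n-h) q').coeff 0 = (1-th)^h * sN n th (n+h) := by
      rw [hTcq', Polynomial.coeff_C_mul, qzero_coeff0 n h hhn th]
    rw [← c3, ← c2, ← c1, c4]
  -- final arithmetic
  apply mul_left_cancel₀ (pow_ne_zero (h+1) hθ)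
  rw [hkey, sN, show 2*n - (n+h) = n - h by omega,
    show ((2*n).choose (n+h) : ℝ) = ((2*n).choose (n-h) : ℝ) by
      have := Nat.choose_symm (show n+h ≤ 2*n by omega)
      rw [show 2*n - (n+h) = n - h by omega] at this
      rw [this],
    show th^(n+h) = th^(h+1) * th^(n-1) by rw [← pow_add]; congr 1; omega]
  have e2 : (1-th)^h * (1-th)^(n-h) = (1-th)^n := by rw [← pow_add]; congr 1; omega
  linear_combination (th^(h+1) * th^(n-1) * ((2*n).choose (n-h) : ℝ)) * e2
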